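/- The function φ(r,s) = (√(1 + λ²(s² - r²)) + λs)/(1 - λ²r²), defined for λ ≥ 0 and (r,s) with λr < 1 and 1 + λ²(s² - r²) > 0, satisfies the PDE r·φ_ss - φ_r + s·φ_rs = 0. -/

import Mathlib

open Real Filter Topology

/-- The generating function of the λ-Funk metric as a spherically symmetric metric. -/
noncomputable def phi (lam r s : ℝ) : ℝ :=
  (Real.sqrt (1 + lam ^ 2 * (s ^ 2 - r ^ 2)) + lam * s) / (1 - lam ^ 2 * r ^ 2)

lemma hasDerivAt_A_s (lam r s : ℝ) :
    HasDerivAt (fun v : ℝ => 1 + lam ^ 2 * (v ^ 2 - r ^ 2)) (lam ^ 2 * (2 * s)) s := by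
  have h : HasDerivAt (fun v : ℝ => v ^ 2 - r ^ 2) (2 * s) s := by
    simpa using ((hasDerivAt_pow 2 s).sub_const (r ^ 2))
  simpa using (h.const_mul (lam ^ 2)).const_add 1

lemma hasDerivAt_A_r (lam r s : ℝ) :
    HasDerivAt (fun u : ℝ => 1 + lam ^ 2 * (s ^ 2 - u ^ 2)) (lam ^ 2 * (-(2 * r))) r := by
  have h : HasDerivAt (fun u : ℝ => s ^ 2 - u ^ 2) (-(2 * r)) r := by
    simpa using ((hasDerivAt_pow 2 r).const_sub (s ^ 2))
  simpa using (h.const_mul (lam ^ 2)).const_add 1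

lemma hasDerivAt_sqrtA_s (lam r s : ℝ) (h : 0 < 1 + lam ^ 2 * (s ^ 2 - r ^ 2)) :
    HasDerivAt (fun v : ℝ => Real.sqrt (1 + lam ^ 2 * (v ^ 2 - r ^ 2)))
      (lam ^ 2 * s / Real.sqrt (1 + lam ^ 2 * (s ^ 2 - r ^ 2))) s := by
  have hs : Real.sqrt (1 + lam ^ 2 * (s ^ 2 - r ^ 2)) ≠ 0 := by positivity
  have := (Real.hasDerivAt_sqrt h.ne').comp s (hasDerivAt_A_s lam r s)
  refine this.congr_deriv ?_
  field_simp

lemma hasDerivAt_sqrtA_r (lam r s : ℝ) (h : 0 < 1 + lam ^ 2 * (s ^ 2 - r ^ 2)) :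
    HasDerivAt (fun u : ℝ => Real.sqrt (1 + lam ^ 2 * (s ^ 2 - u ^ 2)))
      (-(lam ^ 2 * r) / Real.sqrt (1 + lam ^ 2 * (s ^ 2 - r ^ 2))) r := by
  have hs : Real.sqrt (1 + lam ^ 2 * (s ^ 2 - r ^ 2)) ≠ 0 := by positivity
  have := (Real.hasDerivAt_sqrt h.ne').comp r (hasDerivAt_A_r lam r s)
  refine this.congr_deriv ?_
  field_simp

/-- s-derivative of phi, valid for ALL r (the denominator may even vanish). -/
lemma hasDerivAt_phi_s (lam r s : ℝ) (h : 0 < 1 + lam ^ 2 * (s ^ 2 - r ^ 2)) :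
    HasDerivAt (phi lam r)
      ((lam ^ 2 * s * (Real.sqrt (1 + lam ^ 2 * (s ^ 2 - r ^ 2)))⁻¹ + lam)
        / (1 - lam ^ 2 * r ^ 2)) s := by
  have hs : Real.sqrt (1 + lam ^ 2 * (s ^ 2 - r ^ 2)) ≠ 0 := by positivity
  have h1 : HasDerivAt (fun v : ℝ => Real.sqrt (1 + lam ^ 2 * (v ^ 2 - r ^ 2)) + lam * v)
      (lam ^ 2 * s / Real.sqrt (1 + lam ^ 2 * (s ^ 2 - r ^ 2)) + lam) s := by
    exact ((hasDerivAt_sqrtA_s lam r s h).add ((hasDerivAt_id s).const_mul lam)).congr_deriv (by ring)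
  have := h1.div_const (1 - lam ^ 2 * r ^ 2)
  exact this.congr_deriv (by ring)

lemma deriv_phi_s (lam r s : ℝ) (h : 0 < 1 + lam ^ 2 * (s ^ 2 - r ^ 2)) :
    deriv (phi lam r) s
      = (lam ^ 2 * s * (Real.sqrt (1 + lam ^ 2 * (s ^ 2 - r ^ 2)))⁻¹ + lam)
          / (1 - lam ^ 2 * r ^ 2) :=
  (hasDerivAt_phi_s lam r s h).deriv

lemma hasDerivAt_h_r (lam r s : ℝ) (h : 0 < 1 + lam ^ 2 * (s ^ 2 - r ^ 2)) :
    HasDerivAt (fun u : ℝ => lam ^ 2 * s * (Real.sqrt (1 + lam ^ 2 * (s ^ 2 - u ^ 2)))⁻¹ + lam)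
      (lam ^ 2 * s * (-(-(lam ^ 2 * r) / Real.sqrt (1 + lam ^ 2 * (s ^ 2 - r ^ 2)))
          / (Real.sqrt (1 + lam ^ 2 * (s ^ 2 - r ^ 2))) ^ 2)) r := by
  have hs : Real.sqrt (1 + lam ^ 2 * (s ^ 2 - r ^ 2)) ≠ 0 := by positivity
  exact (((hasDerivAt_sqrtA_r lam r s h).inv hs).const_mul (lam ^ 2 * s)).add_const lam

lemma hasDerivAt_phis_s (lam r s : ℝ) (h : 0 < 1 + lam ^ 2 * (s ^ 2 - r ^ 2)) :
    HasDerivAt (fun v : ℝ =>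
        (lam ^ 2 * v * (Real.sqrt (1 + lam ^ 2 * (v ^ 2 - r ^ 2)))⁻¹ + lam)
          / (1 - lam ^ 2 * r ^ 2))
      ((lam ^ 2 * (Real.sqrt (1 + lam ^ 2 * (s ^ 2 - r ^ 2)))⁻¹
          + lam ^ 2 * s * (-(lam ^ 2 * s / Real.sqrt (1 + lam ^ 2 * (s ^ 2 - r ^ 2)))
              / (Real.sqrt (1 + lam ^ 2 * (s ^ 2 - r ^ 2))) ^ 2)) / (1 - lam ^ 2 * r ^ 2)) s := by
  have hs : Real.sqrt (1 + lam ^ 2 * (s ^ 2 - r ^ 2)) ≠ 0 := by positivity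
  have h1 : HasDerivAt (fun v : ℝ => lam ^ 2 * v) (lam ^ 2) s := by
    simpa using (hasDerivAt_id s).const_mul (lam ^ 2)
  have h2 := (hasDerivAt_sqrtA_s lam r s h).inv hs
  exact ((h1.mul h2).add_const lam).div_const (1 - lam ^ 2 * r ^ 2)

lemma hasDerivAt_N_r (lam r s : ℝ) (h : 0 < 1 + lam ^ 2 * (s ^ 2 - r ^ 2)) :
    HasDerivAt (fun u : ℝ => Real.sqrt (1 + lam ^ 2 * (s ^ 2 - u ^ 2)) + lam * s)
      (-(lam ^ 2 * r) / Real.sqrt (1 + lam ^ 2 * (s ^ 2 - r ^ 2))) r :=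
  (hasDerivAt_sqrtA_r lam r s h).add_const (lam * s)

lemma hasDerivAt_D (lam r : ℝ) :
    HasDerivAt (fun u : ℝ => 1 - lam ^ 2 * u ^ 2) (-(lam ^ 2 * (2 * r))) r := by
  simpa using (((hasDerivAt_pow 2 r).const_mul (lam ^ 2)).const_sub 1)

/-- Key non-differentiability workhorse for the degenerate case `1 - λ²r² = 0`. -/
lemma deriv_eq_zero_aux (lam r : ℝ) (g N : ℝ → ℝ) (hg : g r = 0)
    (hd0 : 1 - lam ^ 2 * r ^ 2 = 0)
    (hpunct : ∀ᶠ u in 𝓝[≠] r, g u * (1 - lam ^ 2 * u ^ 2) = N u)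
    (hNcont : ContinuousAt N r)
    (hN : N r ≠ 0 ∨ (N r = 0 ∧ DifferentiableAt ℝ N r ∧ deriv N r ≠ 0)) :
    deriv g r = 0 := by
  by_cases hdiff : DifferentiableAt ℝ g r
  · exfalso
    set G : ℝ → ℝ := fun u => g u * (1 - lam ^ 2 * u ^ 2) with hGdef
    have hGr : G r = 0 := by simp [hGdef, hg]
    have hGderiv : HasDerivAt G 0 r := by
      have := hdiff.hasDerivAt.mul (hasDerivAt_D lam r)
      exact this.congr_deriv (by simp [hg, hd0])
    rcases hN with hN0 | ⟨hN0, hNd, hNd0⟩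
    · -- continuity contradiction
      have h1 : Tendsto G (𝓝[≠] r) (𝓝 0) := by
        have := hGderiv.continuousAt.tendsto
        rw [hGr] at this
        exact this.mono_left nhdsWithin_le_nhds
      have h2 : Tendsto G (𝓝[≠] r) (𝓝 (N r)) := by
        have hn : Tendsto N (𝓝[≠] r) (𝓝 (N r)) :=
          hNcont.tendsto.mono_left nhdsWithin_le_nhds
        exact Filter.Tendsto.congr' (hpunct.mono fun _ h => h.symm) hn
      exact hN0 (tendsto_nhds_unique h2 h1)
    · -- derivative contradiction
      have heq : G =ᶠ[𝓝 r] N := by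
        rw [← nhdsNE_sup_pure r]
        refine eventually_sup.mpr ⟨hpunct, ?_⟩
        simpa [hGr] using hN0.symm
      have := heq.deriv_eq
      rw [hGderiv.deriv] at this
      exact hNd0 this.symm
  · exact deriv_zero_of_not_differentiableAt hdiff

theorem lambdaFunk_hamel_pde (lam r s : ℝ) (hlam : 0 ≤ lam) (hr : lam * r < 1)
    (hpos : 0 < 1 + lam ^ 2 * (s ^ 2 - r ^ 2)) :
    r * deriv (deriv (phi lam r)) s - deriv (fun u => phi lam u s) r +
      s * deriv (fun u => deriv (phi lam u) s) r = 0 := by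
  by_cases hd0 : (1 : ℝ) - lam ^ 2 * r ^ 2 = 0
  · -- Degenerate case: λ²r² = 1
    have hlam0 : lam ≠ 0 := by rintro rfl; norm_num at hd0
    have hlampos : 0 < lam := lt_of_le_of_ne hlam (Ne.symm hlam0)
    have hlr : lam * r = -1 := by
      have h2 : (lam * r - 1) * (lam * r + 1) = 0 := by linear_combination -hd0
      rcases mul_eq_zero.mp h2 with h | h
      · linarith
      · linarith
    have hr0 : r ≠ 0 := by
      rintro rfl; rw [mul_zero] at hlr; norm_num at hlr
    have hA : 1 + lam ^ 2 * (s ^ 2 - r ^ 2) = (lam * s) ^ 2 := by linear_combination hd0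
    have hs0 : s ≠ 0 := by
      rintro rfl
      rw [hA] at hpos; simp at hpos
    -- phi lam r is the zero function
    have hphi0 : phi lam r = fun _ => 0 := by
      funext v; simp [phi, hd0]
    have hsqrtA : Real.sqrt (1 + lam ^ 2 * (s ^ 2 - r ^ 2)) = |lam * s| := by
      rw [hA, Real.sqrt_sq_eq_abs]
    have hsq0 : Real.sqrt (1 + lam ^ 2 * (s ^ 2 - r ^ 2)) ≠ 0 := by positivity
    -- the eventual nonvanishing of D off r
    have hrlt : r < 1 / lam := by
      rw [lt_div_iff₀ hlampos]; nlinarith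
    have hDne : ∀ᶠ u in 𝓝[≠] r, (1 : ℝ) - lam ^ 2 * u ^ 2 ≠ 0 := by
      filter_upwards [eventually_nhdsWithin_of_eventually_nhds (eventually_lt_nhds hrlt),
        self_mem_nhdsWithin] with u hu1 hu2 h0
      have h2 : (lam * u - 1) * (lam * u + 1) = 0 := by linear_combination -h0
      have hlu : lam * u < 1 := by
        have := (mul_lt_mul_iff_right₀ hlampos).mpr hu1
        rwa [mul_one_div, div_self hlam0] at this
      rcases mul_eq_zero.mp h2 with h | h
      · linarith
      · apply hu2
        have : lam * u = lam * r := by rw [hlr]; linarith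
        exact mul_left_cancel₀ hlam0 this
    -- Term 1
    have T1 : deriv (deriv (phi lam r)) s = 0 := by
      rw [hphi0]; simp
    -- Term 2
    have T2 : deriv (fun u => phi lam u s) r = 0 := by
      apply deriv_eq_zero_aux lam r _ (fun u => Real.sqrt (1 + lam ^ 2 * (s ^ 2 - u ^ 2)) + lam * s)
      · simp [phi, hd0]
      · exact hd0
      · filter_upwards [hDne] with u hu
        show phi lam u s * _ = _
        rw [phi, div_mul_cancel₀ _ hu]
      · have : Continuous fun u : ℝ => Real.sqrt (1 + lam ^ 2 * (s ^ 2 - u ^ 2)) + lam * s := by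
          fun_prop
        exact this.continuousAt
      · rcases lt_or_gt_of_ne hs0 with hs | hs
        · -- s < 0 : N r = 0, derivative nonzero
          right
          have hNr : Real.sqrt (1 + lam ^ 2 * (s ^ 2 - r ^ 2)) + lam * s = 0 := by
            rw [hsqrtA, abs_of_nonpos (by nlinarith : lam * s ≤ 0)]; ring
          refine ⟨hNr, (hasDerivAt_N_r lam r s hpos).differentiableAt, ?_⟩
          rw [(hasDerivAt_N_r lam r s hpos).deriv]
          exact div_ne_zero (neg_ne_zero.mpr (mul_ne_zero (pow_ne_zero 2 hlam0) hr0)) hsq0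
        · -- s > 0 : N r ≠ 0
          left
          rw [hsqrtA, abs_of_pos (by positivity : 0 < lam * s)]
          positivity
    -- Term 3
    have T3 : deriv (fun u => deriv (phi lam u) s) r = 0 := by
      have hAev : ∀ᶠ u in 𝓝 r, 0 < 1 + lam ^ 2 * (s ^ 2 - u ^ 2) := by
        have hc : ContinuousAt (fun u : ℝ => 1 + lam ^ 2 * (s ^ 2 - u ^ 2)) r := by fun_prop
        exact hc.eventually (eventually_gt_nhds hpos)
      apply deriv_eq_zero_aux lam r _
        (fun u => lam ^ 2 * s * (Real.sqrt (1 + lam ^ 2 * (s ^ 2 - u ^ 2)))⁻¹ + lam)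
      · rw [hphi0]; simp
      · exact hd0
      · filter_upwards [hDne, eventually_nhdsWithin_of_eventually_nhds hAev] with u hu hAu
        rw [deriv_phi_s lam u s hAu, div_mul_cancel₀ _ hu]
      · have hsqc : ContinuousAt (fun u : ℝ => Real.sqrt (1 + lam ^ 2 * (s ^ 2 - u ^ 2))) r := by
          fun_prop
        exact ((hsqc.inv₀ hsq0).const_mul _).add continuousAt_const
      · rcases lt_or_gt_of_ne hs0 with hs | hs
        · -- s < 0 : h r = 0, derivative nonzero
          right
          have hhr : lam ^ 2 * s * (Real.sqrt (1 + lam ^ 2 * (s ^ 2 - r ^ 2)))⁻¹ + lam = 0 := by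
            rw [hsqrtA, abs_of_nonpos (by nlinarith : lam * s ≤ 0)]
            field_simp
            ring
          refine ⟨hhr, (hasDerivAt_h_r lam r s hpos).differentiableAt, ?_⟩
          rw [(hasDerivAt_h_r lam r s hpos).deriv]
          intro hcontra
          field_simp at hcontra
          simp [hlam0, hs0, hr0] at hcontra
        · -- s > 0 : h r = 2λ ≠ 0
          left
          rw [hsqrtA, abs_of_pos (by positivity : 0 < lam * s)]
          have : lam ^ 2 * s * (lam * s)⁻¹ = lam := by field_simp
          rw [this]
          positivity
    rw [T1, T2, T3]; ring
  · -- Main case: 1 - λ²r² ≠ 0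
    have ha : 0 < Real.sqrt (1 + lam ^ 2 * (s ^ 2 - r ^ 2)) := Real.sqrt_pos.mpr hpos
    have ha2 : Real.sqrt (1 + lam ^ 2 * (s ^ 2 - r ^ 2)) ^ 2 = 1 + lam ^ 2 * (s ^ 2 - r ^ 2) :=
      Real.sq_sqrt hpos.le
    -- Term 1
    have hevs : ∀ᶠ v in 𝓝 s, 0 < 1 + lam ^ 2 * (v ^ 2 - r ^ 2) := by
      have hc : ContinuousAt (fun v : ℝ => 1 + lam ^ 2 * (v ^ 2 - r ^ 2)) s := by fun_prop
      exact hc.eventually (eventually_gt_nhds hpos)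
    have T1 : deriv (deriv (phi lam r)) s
        = (lam ^ 2 * (Real.sqrt (1 + lam ^ 2 * (s ^ 2 - r ^ 2)))⁻¹
            + lam ^ 2 * s * (-(lam ^ 2 * s / Real.sqrt (1 + lam ^ 2 * (s ^ 2 - r ^ 2)))
                / (Real.sqrt (1 + lam ^ 2 * (s ^ 2 - r ^ 2))) ^ 2)) / (1 - lam ^ 2 * r ^ 2) := by
      have heq : deriv (phi lam r) =ᶠ[𝓝 s] fun v =>
          (lam ^ 2 * v * (Real.sqrt (1 + lam ^ 2 * (v ^ 2 - r ^ 2)))⁻¹ + lam)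
            / (1 - lam ^ 2 * r ^ 2) :=
        hevs.mono fun v hv => deriv_phi_s lam r v hv
      rw [heq.deriv_eq]
      exact (hasDerivAt_phis_s lam r s hpos).deriv
    -- Term 2
    have T2 : deriv (fun u => phi lam u s) r
        = (-(lam ^ 2 * r) / Real.sqrt (1 + lam ^ 2 * (s ^ 2 - r ^ 2)) * (1 - lam ^ 2 * r ^ 2)
            - (Real.sqrt (1 + lam ^ 2 * (s ^ 2 - r ^ 2)) + lam * s) * (-(lam ^ 2 * (2 * r))))
            / (1 - lam ^ 2 * r ^ 2) ^ 2 := by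
      exact ((hasDerivAt_N_r lam r s hpos).div (hasDerivAt_D lam r) hd0).deriv
    -- Term 3
    have hevr : ∀ᶠ u in 𝓝 r, 0 < 1 + lam ^ 2 * (s ^ 2 - u ^ 2) := by
      have hc : ContinuousAt (fun u : ℝ => 1 + lam ^ 2 * (s ^ 2 - u ^ 2)) r := by fun_prop
      exact hc.eventually (eventually_gt_nhds hpos)
    have T3 : deriv (fun u => deriv (phi lam u) s) r
        = (lam ^ 2 * s * (-(-(lam ^ 2 * r) / Real.sqrt (1 + lam ^ 2 * (s ^ 2 - r ^ 2)))
              / (Real.sqrt (1 + lam ^ 2 * (s ^ 2 - r ^ 2))) ^ 2) * (1 - lam ^ 2 * r ^ 2)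
            - (lam ^ 2 * s * (Real.sqrt (1 + lam ^ 2 * (s ^ 2 - r ^ 2)))⁻¹ + lam)
                * (-(lam ^ 2 * (2 * r)))) / (1 - lam ^ 2 * r ^ 2) ^ 2 := by
      have heq : (fun u => deriv (phi lam u) s) =ᶠ[𝓝 r] fun u =>
          (lam ^ 2 * s * (Real.sqrt (1 + lam ^ 2 * (s ^ 2 - u ^ 2)))⁻¹ + lam)
            / (1 - lam ^ 2 * u ^ 2) :=
        hevr.mono fun u hu => deriv_phi_s lam u s hu
      rw [heq.deriv_eq]
      exact ((hasDerivAt_h_r lam r s hpos).div (hasDerivAt_D lam r) hd0).deriv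
    rw [T1, T2, T3]
    set a := Real.sqrt (1 + lam ^ 2 * (s ^ 2 - r ^ 2)) with hadef
    have ha0 : a ≠ 0 := ha.ne'
    field_simp
    rw [mul_zero, div_eq_zero_iff]; left
    linear_combination (-(2 * r * lam ^ 2 * a ^ 2)) * ha2
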